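/- Let b ≥ 2 and let T be a tree rooted at a burned vertex s such that s has at most b+1 children and every other vertex has at most b+1 children. If every non-leaf vertex of T has exactly b+1 children (T is complete in this sense), then no firefighting strategy with b firefighters per time step can save all leaves of T; if some non-leaf vertex has at most b children, then such a strategy exists. Hence all leaves can be saved if and only if T is not complete. -/

import Mathlib

/-- `burnedSet G s φ t` is the set of vertices of `G` burned at time `t` in the firefighting
process where `s` is burned at time `0` and `φ t'` is the set of vertices protected at time
step `t'`: at each step the fire spreads from every burned vertex to each of its neighbors
that has not been protected at any time step so far. -/
def burnedSet {V : Type} (G : SimpleGraph V) (s : V) (φ : ℕ → Finset V) : ℕ → Set V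
  | 0 => {s}
  | t + 1 => burnedSet G s φ t ∪
      {w | (∃ v ∈ burnedSet G s φ t, G.Adj v w) ∧ ∀ t' ≤ t + 1, w ∉ φ t'}

/-- A strategy is valid with respect to budget `b` if no vertex is protected at time `0`,
at most `b` vertices are protected at each time step, and a vertex protected at time `t+1`
is not burned at time `t`. -/
def validStrategy {V : Type} (G : SimpleGraph V) (s : V) (b : ℕ) (φ : ℕ → Finset V) : Prop :=
  φ 0 = ∅ ∧ (∀ t, (φ t).card ≤ b) ∧ ∀ t v, v ∈ φ (t + 1) → v ∉ burnedSet G s φ t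

/-- A vertex is saved if it is never burned. -/
def savedBy {V : Type} (G : SimpleGraph V) (s : V) (φ : ℕ → Finset V) (v : V) : Prop :=
  ∀ t, v ∉ burnedSet G s φ t

open SimpleGraph Finset

section Helpers

variable {V : Type} {G : SimpleGraph V} {s : V} {φ : ℕ → Finset V}

lemma burnedSet_mono_le {t t' : ℕ} (h : t ≤ t') : burnedSet G s φ t ⊆ burnedSet G s φ t' := by
  induction t' with
  | zero =>
    have : t = 0 := by omega
    subst this; exact fun v hv => hv
  | succ n ih =>
    rcases Nat.lt_or_ge t (n+1) with h' | h'
    · exact fun v hv => Or.inl (ih (by omega) hv)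
    · have : t = n + 1 := by omega
      subst this; exact fun v hv => hv

lemma s_mem_burnedSet (t : ℕ) : s ∈ burnedSet G s φ t :=
  burnedSet_mono_le (Nat.zero_le t) rfl

lemma burnedSet_spread {t : ℕ} {v w : V} (hv : v ∈ burnedSet G s φ t) (hadj : G.Adj v w)
    (hw : w ∉ burnedSet G s φ (t+1)) : ∃ t' ≤ t+1, w ∈ φ t' := by
  by_contra hcon
  push_neg at hcon
  exact hw (Or.inr ⟨⟨v, hv, hadj⟩, hcon⟩)

lemma exists_prefix_path {u v : V} (p : G.Walk u v) (hp : p.IsPath) :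
    ∀ k, k ≤ p.length → ∃ q : G.Walk u (p.getVert k), q.IsPath ∧ q.length = k ∧
      q.support ⊆ p.support := by
  induction p with
  | nil =>
    intro k hk
    simp only [SimpleGraph.Walk.length_nil, Nat.le_zero] at hk
    subst hk
    exact ⟨SimpleGraph.Walk.nil, by simp⟩
  | @cons a c d h q ih =>
    intro k hk
    match k with
    | 0 => exact ⟨SimpleGraph.Walk.nil, SimpleGraph.Walk.IsPath.nil, rfl, fun x hx => by
        have hx' : x = a := List.mem_singleton.1 hx
        show x ∈ a :: q.support; exact List.mem_cons.2 (Or.inl hx')⟩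
    | k + 1 =>
      rw [SimpleGraph.Walk.cons_isPath_iff] at hp
      obtain ⟨q', hq', hlen, hsupp⟩ := ih hp.1 k (by simpa using hk)
      refine ⟨SimpleGraph.Walk.cons h q', ?_, by simp [hlen], ?_⟩
      · exact (SimpleGraph.Walk.cons_isPath_iff h q').2 ⟨hq', fun hc => hp.2 (hsupp hc)⟩
      · intro x hx
        replace hx : x = a ∨ x ∈ q'.support := List.mem_cons.1 hx
        simp only [SimpleGraph.Walk.support_cons, List.mem_cons] at ⊢
        exact hx.imp id (fun h' => hsupp h')

end Helpers

section Helpers2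

variable {V : Type} [DecidableEq V] {G : SimpleGraph V}

lemma tree_path_length_eq_dist (hG : G.IsTree) {u v : V} (p : G.Walk u v) (hp : p.IsPath) :
    p.length = G.dist u v := by
  obtain ⟨w, hw⟩ := hG.isConnected.exists_walk_length_eq_dist u v
  have hbp : w.bypass.IsPath := w.bypass_isPath
  have hpe : p = w.bypass := by
    have := hG.IsAcyclic.path_unique ⟨p, hp⟩ ⟨w.bypass, hbp⟩
    exact congrArg Subtype.val this
  have h1 : p.length ≤ w.length := hpe ▸ w.length_bypass_le
  have h2 := SimpleGraph.dist_le p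
  omega

lemma dist_getVert (hG : G.IsTree) {u v : V} (p : G.Walk u v) (hp : p.IsPath) {k : ℕ}
    (hk : k ≤ p.length) : G.dist u (p.getVert k) = k := by
  obtain ⟨q, hq, hqlen, -⟩ := exists_prefix_path p hp k hk
  have h1 : G.dist u (p.getVert k) ≤ k := by have := SimpleGraph.dist_le q; omega
  obtain ⟨r, hr, hrlen, -⟩ := exists_prefix_path p.reverse hp.reverse (p.length - k) (by simp)
  have hgv : p.reverse.getVert (p.length - k) = p.getVert k := by
    rw [SimpleGraph.Walk.getVert_reverse]; congr 1; omega
  have h2 : G.dist v (p.getVert k) ≤ p.length - k := by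
    have := SimpleGraph.dist_le r
    rw [← hgv]; omega
  have h3 : G.dist u v = p.length := (tree_path_length_eq_dist hG p hp).symm
  have h4 := hG.isConnected.dist_triangle (u := u) (v := p.getVert k) (w := v)
  have h5 : G.dist (p.getVert k) v = G.dist v (p.getVert k) := SimpleGraph.dist_comm
  omega

lemma getVert_injOn (hG : G.IsTree) {u v : V} (p : G.Walk u v) (hp : p.IsPath) {j k : ℕ}
    (hj : j ≤ p.length) (hk : k ≤ p.length) (h : p.getVert j = p.getVert k) : j = k := by
  have h1 := dist_getVert hG p hp hj
  have h2 := dist_getVert hG p hp hk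
  rw [h] at h1
  omega

lemma no_chord (hG : G.IsTree) {u v : V} (p : G.Walk u v) (hp : p.IsPath) {j k : ℕ}
    (hj : j ≤ p.length) (hk : k ≤ p.length) (h : G.Adj (p.getVert j) (p.getVert k)) :
    j = k + 1 ∨ k = j + 1 := by
  have hne : j ≠ k := fun he => G.ne_of_adj h (by rw [he])
  have hdj := dist_getVert hG p hp hj
  have hdk := dist_getVert hG p hp hk
  have h1 : G.dist (p.getVert j) (p.getVert k) ≤ 1 :=
    SimpleGraph.dist_le (SimpleGraph.Walk.cons h SimpleGraph.Walk.nil)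
  have h2 := hG.isConnected.dist_triangle (u := u) (v := p.getVert j) (w := p.getVert k)
  have h3 := hG.isConnected.dist_triangle (u := u) (v := p.getVert k) (w := p.getVert j)
  have h4 : G.dist (p.getVert k) (p.getVert j) ≤ 1 := SimpleGraph.dist_comm ▸ h1
  omega

end Helpers2

section Helpers3
set_option linter.unusedSectionVars false

variable {V : Type} [DecidableEq V] {G : SimpleGraph V}

noncomputable def treePath (hG : G.IsTree) (s v : V) : G.Walk s v :=
  (hG.existsUnique_path s v).exists.choose

lemma treePath_isPath (hG : G.IsTree) (s v : V) : (treePath hG s v).IsPath :=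
  (hG.existsUnique_path s v).exists.choose_spec

lemma treePath_unique (hG : G.IsTree) {s v : V} (p : G.Walk s v) (hp : p.IsPath) :
    p = treePath hG s v := by
  have := hG.IsAcyclic.path_unique ⟨p, hp⟩ ⟨treePath hG s v, treePath_isPath hG s v⟩
  exact congrArg Subtype.val this

noncomputable def par (hG : G.IsTree) (s v : V) : V :=
  (treePath hG s v).getVert ((treePath hG s v).length - 1)

lemma par_self (hG : G.IsTree) (s : V) : par hG s s = s := by
  unfold par
  have : (SimpleGraph.Walk.nil : G.Walk s s) = treePath hG s s :=
    treePath_unique hG _ (by simp)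
  rw [← this]
  rfl

lemma treePath_length_pos (hG : G.IsTree) {s v : V} (hv : v ≠ s) :
    0 < (treePath hG s v).length := by
  rcases Nat.eq_zero_or_pos (treePath hG s v).length with h | h
  · exact absurd (SimpleGraph.Walk.eq_of_length_eq_zero h) hv.symm
  · exact h

lemma par_adj (hG : G.IsTree) {s v : V} (hv : v ≠ s) : G.Adj (par hG s v) v := by
  have hpos := treePath_length_pos hG hv
  have := (treePath hG s v).adj_getVert_succ (i := (treePath hG s v).length - 1) (by omega)
  rw [show (treePath hG s v).length - 1 + 1 = (treePath hG s v).length by omega,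
    SimpleGraph.Walk.getVert_length] at this
  exact this

lemma par_dichotomy (hG : G.IsTree) {s u v : V} (h : G.Adj u v) :
    par hG s v = u ∨ par hG s u = v := by
  set p := treePath hG s u with hpdef
  have hp : p.IsPath := treePath_isPath hG s u
  by_cases hv : v ∈ p.support
  · right
    have hr : (p.dropUntil v hv).IsPath := hp.dropUntil hv
    have hedge : (SimpleGraph.Walk.cons h.symm SimpleGraph.Walk.nil : G.Walk v u).IsPath := by
      simp [SimpleGraph.Walk.cons_isPath_iff, h.ne']
    have hequ := hG.IsAcyclic.path_unique ⟨p.dropUntil v hv, hr⟩ ⟨.cons h.symm .nil, hedge⟩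
    have hdrop : p.dropUntil v hv = .cons h.symm .nil := congrArg Subtype.val hequ
    have hspec := p.take_spec hv
    rw [hdrop] at hspec
    unfold par
    rw [← hpdef, ← hspec]
    have hlen : ((p.takeUntil v hv).append (.cons h.symm .nil)).length
        = (p.takeUntil v hv).length + 1 := by
      rw [SimpleGraph.Walk.length_append]; rfl
    rw [hlen, Nat.add_sub_cancel, SimpleGraph.Walk.getVert_append]
    simp
  · left
    have hp' : (p.concat h).IsPath := by
      rw [SimpleGraph.Walk.isPath_def] at hp ⊢
      rw [SimpleGraph.Walk.concat_eq_append, SimpleGraph.Walk.support_append]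
      simp only [SimpleGraph.Walk.support_cons, SimpleGraph.Walk.support_nil, List.tail_cons]
      rw [List.nodup_append]
      exact ⟨hp, List.nodup_singleton v, by simpa using fun a ha (hav : a = v) => hv (hav ▸ ha)⟩
    have heq : p.concat h = treePath hG s v := treePath_unique hG _ hp'
    unfold par
    rw [← heq, SimpleGraph.Walk.length_concat, Nat.add_sub_cancel,
      SimpleGraph.Walk.concat_eq_append, SimpleGraph.Walk.getVert_append]
    simp

end Helpers3

section Forward

lemma forward_dir {V : Type} [Fintype V] [DecidableEq V] {G : SimpleGraph V} [DecidableRel G.Adj]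
    (hG : G.IsTree) (s : V) (b : ℕ)
    (hdegs : G.degree s = b + 1)
    (hcomp : ∀ v, v ≠ s → G.degree v ≠ 1 → G.degree v = b + 2)
    (φ : ℕ → Finset V) (hφ : validStrategy G s b φ)
    (hsave : ∀ v, G.degree v = 1 → v ≠ s → savedBy G s φ v) : False := by
  classical
  have hmem : ∀ (t : ℕ) (v : V),
      v ∈ (Set.toFinite (burnedSet G s φ t)).toFinset ↔ v ∈ burnedSet G s φ t :=
    fun t v => Set.Finite.mem_toFinset _
  have key : ∀ t : ℕ, t + 1 ≤ ((Set.toFinite (burnedSet G s φ t)).toFinset).card := by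
    intro t
    induction t with
    | zero => exact Finset.card_pos.2 ⟨s, (hmem 0 s).2 (s_mem_burnedSet 0)⟩
    | succ t ih =>
      set Bt := (Set.toFinite (burnedSet G s φ t)).toFinset with hBtdef
      set Bt1 := (Set.toFinite (burnedSet G s φ (t+1))).toFinset with hBt1def
      set Ch : V → Finset V := fun v => (G.neighborFinset v).erase (par hG s v) with hChdef
      have hdisj : ∀ u ∈ Bt, ∀ v ∈ Bt, u ≠ v → Disjoint (Ch u) (Ch v) := by
        intro u _ v _ huv
        rw [Finset.disjoint_left]
        intro w hwu hwv
        simp only [hChdef, Finset.mem_erase, SimpleGraph.mem_neighborFinset] at hwu hwv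
        have h1 : par hG s w = u := by
          rcases par_dichotomy hG (s := s) hwu.2 with h | h
          · exact h
          · exact absurd h.symm hwu.1
        have h2 : par hG s w = v := by
          rcases par_dichotomy hG (s := s) hwv.2 with h | h
          · exact h
          · exact absurd h.symm hwv.1
        exact huv (h1 ▸ h2)
      have hcard : ∀ v ∈ Bt, (Ch v).card = b + 1 := by
        intro v hv
        by_cases hvs : v = s
        · subst hvs
          simp only [hChdef]
          rw [par_self hG, Finset.erase_eq_of_notMem (G.notMem_neighborFinset_self v),
            G.card_neighborFinset_eq_degree, hdegs]
        · have hdeg1 : G.degree v ≠ 1 := fun h1 => hsave v h1 hvs t ((hmem t v).1 hv)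
          have hdeg : G.degree v = b + 2 := hcomp v hvs hdeg1
          have hparmem : par hG s v ∈ G.neighborFinset v :=
            (SimpleGraph.mem_neighborFinset G v _).2 (par_adj hG hvs).symm
          simp only [hChdef]
          rw [Finset.card_erase_of_mem hparmem, G.card_neighborFinset_eq_degree, hdeg]
          omega
      set C := Bt.biUnion Ch with hCdef
      have hCcard : C.card = Bt.card * (b + 1) := by
        rw [hCdef, Finset.card_biUnion hdisj]
        rw [Finset.sum_congr rfl hcard, Finset.sum_const, smul_eq_mul]
      set P := (Finset.range (t+2)).biUnion φ with hPdef
      have hPcard : P.card ≤ (t+1) * b := by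
        calc P.card ≤ ∑ i ∈ Finset.range (t+2), (φ i).card := Finset.card_biUnion_le
          _ = (∑ i ∈ Finset.range (t+1), (φ (i+1)).card) + (φ 0).card :=
            Finset.sum_range_succ' _ _
          _ = ∑ i ∈ Finset.range (t+1), (φ (i+1)).card := by rw [hφ.1]; simp
          _ ≤ ∑ _i ∈ Finset.range (t+1), b := Finset.sum_le_sum (fun i _ => hφ.2.1 (i+1))
          _ = (t+1) * b := by simp [Finset.sum_const, Finset.card_range]
      have hsub : C ⊆ (Bt1.erase s) ∪ P := by
        intro w hw
        rw [hCdef, Finset.mem_biUnion] at hw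
        obtain ⟨v, hv, hwv⟩ := hw
        simp only [hChdef, Finset.mem_erase, SimpleGraph.mem_neighborFinset] at hwv
        have hadj : G.Adj v w := hwv.2
        have hws : w ≠ s := by
          intro he
          rcases par_dichotomy hG (s := s) hadj with h | h
          · rw [he, par_self hG] at h
            rw [← h] at hadj
            rw [he] at hadj
            exact G.loopless.irrefl s hadj
          · exact hwv.1 h.symm
        by_cases hb1 : w ∈ Bt1
        · exact Finset.mem_union_left _ (Finset.mem_erase.2 ⟨hws, hb1⟩)
        · obtain ⟨t', ht', hwt'⟩ := burnedSet_spread ((hmem t v).1 hv) hadj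
            (fun hc => hb1 ((hmem _ w).2 hc))
          exact Finset.mem_union_right _
            (Finset.mem_biUnion.2 ⟨t', Finset.mem_range.2 (by omega), hwt'⟩)
      have hsmem : s ∈ Bt1 := (hmem _ s).2 (s_mem_burnedSet _)
      have hpos : 1 ≤ Bt1.card := Finset.card_pos.2 ⟨s, hsmem⟩
      have hineq : Bt.card * (b+1) ≤ (Bt1.card - 1) + (t+1) * b := by
        calc Bt.card * (b+1) = C.card := hCcard.symm
          _ ≤ ((Bt1.erase s) ∪ P).card := Finset.card_le_card hsub
          _ ≤ (Bt1.erase s).card + P.card := Finset.card_union_le _ _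
          _ = (Bt1.card - 1) + P.card := by rw [Finset.card_erase_of_mem hsmem]
          _ ≤ (Bt1.card - 1) + (t+1) * b := by omega
      have hmul : (t+1) * (b+1) ≤ Bt.card * (b+1) := Nat.mul_le_mul_right _ ih
      have hexp : (t+1) * (b+1) = (t+1) * b + (t+1) := by ring
      have hchain : (t+1) * b + (t+1) ≤ (Bt1.card - 1) + (t+1) * b := by
        rw [← hexp]; exact le_trans hmul hineq
      have hfin : t + 1 ≤ Bt1.card - 1 := by
        rw [Nat.add_comm (Bt1.card - 1) ((t+1)*b)] at hchain
        exact Nat.le_of_add_le_add_left hchain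
      omega
  have h1 := key (Fintype.card V)
  have h2 := Finset.card_le_univ ((Set.toFinite (burnedSet G s φ (Fintype.card V))).toFinset)
  omega

end Forward

section Backward

lemma backward_dir {V : Type} [Fintype V] [DecidableEq V] {G : SimpleGraph V} [DecidableRel G.Adj]
    (hG : G.IsTree) (s : V) (b : ℕ)
    (hs : G.degree s ≤ b + 1) (hmax : ∀ v, v ≠ s → G.degree v ≤ b + 2)
    (hnc : ¬(G.degree s = b + 1 ∧ ∀ v, v ≠ s → G.degree v ≠ 1 → G.degree v = b + 2)) :
    ∃ φ : ℕ → Finset V, validStrategy G s b φ ∧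
      ∀ v, G.degree v = 1 → v ≠ s → savedBy G s φ v := by
  classical
  -- choose the target vertex v₀
  obtain ⟨v₀, hK⟩ : ∃ v₀ : V, (v₀ = s ∧ G.degree s ≤ b) ∨
      (v₀ ≠ s ∧ G.degree v₀ ≤ b + 1 ∧ G.degree v₀ ≠ 1) := by
    by_cases hds : G.degree s ≤ b
    · exact ⟨s, Or.inl ⟨rfl, hds⟩⟩
    · push_neg at hnc
      obtain ⟨v₀, hne, hdeg1, hdegne⟩ := hnc (by omega)
      refine ⟨v₀, Or.inr ⟨hne, ?_, hdeg1⟩⟩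
      have := hmax v₀ hne
      omega
  set p := treePath hG s v₀ with hpdef
  have hp : p.IsPath := treePath_isPath hG s v₀
  set d := p.length with hddef
  set q : ℕ → V := fun k => p.getVert k with hqdef
  have hq0 : q 0 = s := p.getVert_zero
  have hqd : ∀ k, d ≤ k → q k = v₀ := fun k hk => p.getVert_of_length_le hk
  have hqinj : ∀ j k, j ≤ d → k ≤ d → q j = q k → j = k :=
    fun j k hj hk h => getVert_injOn hG p hp hj hk h
  have hqadj : ∀ k, k < d → G.Adj (q k) (q (k+1)) := fun k hk => p.adj_getVert_succ hk
  have hd0 : d = 0 → v₀ = s := by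
    intro h
    rw [hddef] at h
    exact (SimpleGraph.Walk.eq_of_length_eq_zero h).symm
  set φ : ℕ → Finset V := fun t => match t with
    | 0 => (∅ : Finset V)
    | k+1 => if k ≤ d then ((G.neighborFinset (q k)).erase (q (k+1))).erase (q (k-1))
             else (∅ : Finset V) with hφdef
  -- the burned set stays on the path
  have hBsub : ∀ t, ∀ w ∈ burnedSet G s φ t, ∃ j, j ≤ t ∧ j ≤ d ∧ w = q j := by
    intro t
    induction t with
    | zero =>
      intro w hw
      exact ⟨0, le_refl 0, Nat.zero_le d, by rw [hq0]; exact hw⟩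
    | succ t ih =>
      intro w hw
      rcases hw with hw | ⟨⟨v, hv, hadj⟩, hunprot⟩
      · obtain ⟨j, hj1, hj2, hj3⟩ := ih w hw
        exact ⟨j, by omega, hj2, hj3⟩
      · obtain ⟨k, hk1, hk2, hk3⟩ := ih v hv
        subst hk3
        by_cases hw1 : w = q (k+1)
        · by_cases hk1d : k + 1 ≤ d
          · exact ⟨k+1, by omega, hk1d, hw1⟩
          · refine ⟨d, by omega, le_refl d, ?_⟩
            rw [hw1, hqd (k+1) (by omega), hqd d (le_refl d)]
        · by_cases hw2 : w = q (k-1)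
          · exact ⟨k-1, by omega, by omega, hw2⟩
          · exfalso
            apply hunprot (k+1) (by omega)
            show w ∈ φ (k+1)
            simp only [hφdef, if_pos hk2]
            rw [Finset.mem_erase, Finset.mem_erase, SimpleGraph.mem_neighborFinset]
            exact ⟨hw2, hw1, hadj⟩
  refine ⟨φ, ⟨rfl, ?_, ?_⟩, ?_⟩
  · -- card bound
    intro t
    match t with
    | 0 => simp [hφdef]
    | k+1 =>
      simp only [hφdef]
      by_cases hkd : k ≤ d
      · rw [if_pos hkd]
        by_cases hk0 : k = 0
        · subst hk0
          by_cases hd0' : d = 0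
          · -- v₀ = s, degree s ≤ b
            have hv0s := hd0 hd0'
            have hdsb : G.degree s ≤ b := by
              rcases hK with ⟨-, h⟩ | ⟨hne, -, -⟩
              · exact h
              · exact absurd hv0s hne
            calc (((G.neighborFinset (q 0)).erase (q 1)).erase (q (0-1))).card
                ≤ (G.neighborFinset (q 0)).card :=
                  le_trans (Finset.card_erase_le) (Finset.card_erase_le)
              _ ≤ b := by rw [hq0, G.card_neighborFinset_eq_degree]; exact hdsb
          · -- 0 < d : q 1 ∈ N(s)
            have hadj01 : G.Adj (q 0) (q 1) := hqadj 0 (by omega)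
            have hmem1 : q 1 ∈ G.neighborFinset (q 0) :=
              (SimpleGraph.mem_neighborFinset G _ _).2 hadj01
            calc (((G.neighborFinset (q 0)).erase (q 1)).erase (q (0-1))).card
                ≤ ((G.neighborFinset (q 0)).erase (q 1)).card := Finset.card_erase_le
              _ = (G.neighborFinset (q 0)).card - 1 := Finset.card_erase_of_mem hmem1
              _ ≤ b := by
                  rw [hq0, G.card_neighborFinset_eq_degree]
                  omega
        · -- 0 < k
          have hk0' : 0 < k := Nat.pos_of_ne_zero hk0
          have hqks : q k ≠ s := by
            intro h
            have := hqinj k 0 hkd (Nat.zero_le d) (by rw [hq0]; exact h)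
            omega
          by_cases hkd' : k < d
          · -- interior vertex: degree ≤ b+2, remove two distinct neighbors
            have hadjk : G.Adj (q k) (q (k+1)) := hqadj k hkd'
            have hadjk' : G.Adj (q (k-1)) (q k) := by
              have := hqadj (k-1) (by omega)
              rw [show k - 1 + 1 = k by omega] at this
              exact this
            have hmem1 : q (k+1) ∈ G.neighborFinset (q k) :=
              (SimpleGraph.mem_neighborFinset G _ _).2 hadjk
            have hmem2 : q (k-1) ∈ (G.neighborFinset (q k)).erase (q (k+1)) := by
              rw [Finset.mem_erase]
              refine ⟨?_, (SimpleGraph.mem_neighborFinset G _ _).2 hadjk'.symm⟩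
              intro h
              have := hqinj (k-1) (k+1) (by omega) (by omega) h
              omega
            rw [Finset.card_erase_of_mem hmem2, Finset.card_erase_of_mem hmem1,
              G.card_neighborFinset_eq_degree]
            have := hmax (q k) hqks
            omega
          · -- k = d > 0 : endpoint v₀
            have hkdeq : k = d := by omega
            have hv0 : q k = v₀ := hqd k (by omega)
            have hv0ne : v₀ ≠ s := by rw [← hv0]; exact hqks
            have hdegv0 : G.degree v₀ ≤ b + 1 := by
              rcases hK with ⟨he, -⟩ | ⟨-, h, -⟩
              · exact absurd he hv0ne
              · exact h
            have hadjk' : G.Adj (q (k-1)) (q k) := by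
              have := hqadj (k-1) (by omega)
              rw [show k - 1 + 1 = k by omega] at this
              exact this
            have hmem2 : q (k-1) ∈ (G.neighborFinset (q k)).erase (q (k+1)) := by
              rw [Finset.mem_erase]
              refine ⟨?_, (SimpleGraph.mem_neighborFinset G _ _).2 hadjk'.symm⟩
              intro h
              have h2 : q (k+1) = q k := by rw [hqd (k+1) (by omega), hv0]
              rw [h2] at h
              have := hqinj (k-1) k (by omega) (by omega) h
              omega
            calc (((G.neighborFinset (q k)).erase (q (k+1))).erase (q (k-1))).card
                = ((G.neighborFinset (q k)).erase (q (k+1))).card - 1 :=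
                  Finset.card_erase_of_mem hmem2
              _ ≤ (G.neighborFinset (q k)).card - 1 := by
                  have := Finset.card_erase_le
                    (s := G.neighborFinset (q k)) (a := q (k+1))
                  omega
              _ ≤ b := by
                  rw [G.card_neighborFinset_eq_degree, hv0]
                  omega
      · rw [if_neg hkd]; simp
  · -- protected vertices are not already burned
    intro t w hwφ hwB
    obtain ⟨j, hj1, hj2, hj3⟩ := hBsub t w hwB
    simp only [hφdef] at hwφ
    by_cases hkd : t ≤ d
    · rw [if_pos hkd] at hwφ
      rw [Finset.mem_erase, Finset.mem_erase, SimpleGraph.mem_neighborFinset] at hwφ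
      obtain ⟨hne1, hne2, hadj⟩ := hwφ
      rw [hj3] at hadj
      rcases no_chord hG p hp hkd hj2 hadj with h | h
      · exact hne1 (by rw [hj3, show t - 1 = j by omega])
      · omega
    · rw [if_neg hkd] at hwφ
      exact absurd hwφ (Finset.notMem_empty w)
  · -- leaves are saved
    intro v hdeg hne t hvB
    obtain ⟨j, hj1, hj2, hj3⟩ := hBsub t v hvB
    by_cases hj0 : j = 0
    · subst hj0
      rw [hq0] at hj3
      exact hne hj3
    · by_cases hjd : j < d
      · -- interior vertex has degree ≥ 2
        have hadjk : G.Adj (q j) (q (j+1)) := hqadj j hjd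
        have hadjk' : G.Adj (q (j-1)) (q j) := by
          have := hqadj (j-1) (by omega)
          rw [show j - 1 + 1 = j by omega] at this
          exact this
        have h2 : 2 ≤ G.degree (q j) := by
          rw [← G.card_neighborFinset_eq_degree]
          apply Finset.one_lt_card.2
          refine ⟨q (j+1), (SimpleGraph.mem_neighborFinset G _ _).2 hadjk,
            q (j-1), (SimpleGraph.mem_neighborFinset G _ _).2 hadjk'.symm, ?_⟩
          intro h
          have := hqinj (j+1) (j-1) (by omega) (by omega) h
          omega
        rw [hj3] at hdeg
        omega
      · -- j = d : v = v₀
        have hjd' : j = d := by omega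
        have hv0 : q j = v₀ := hqd j (by omega)
        have hv0ne : v₀ ≠ s := by
          intro h
          have : q j = q 0 := by rw [hv0, hq0, h]
          have := hqinj j 0 hj2 (Nat.zero_le d) this
          omega
        rcases hK with ⟨he, -⟩ | ⟨-, -, h1⟩
        · exact hv0ne he
        · rw [hj3, hv0] at hdeg
          exact h1 hdeg

end Backward

/-- Let `b ≥ 2` and let `T` be a tree rooted at the burned vertex `s` such that `s` has at
most `b+1` children (degree at most `b+1`) and every other vertex has at most `b+1`
children (degree at most `b+2`). The leaves of `T` are the vertices of degree `1` other
than `s`. Then all leaves can be saved by a valid budget-`b` strategy if and only if `T` is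
not complete, where `T` is complete when every non-leaf vertex has exactly `b+1` children,
i.e. `deg s = b+1` and every non-leaf vertex `v ≠ s` has `deg v = b+2`. -/
theorem stmt3 {V : Type} [Fintype V] [DecidableEq V] (G : SimpleGraph V) [DecidableRel G.Adj]
    (hG : G.IsTree) (s : V) (b : ℕ) (hb : 2 ≤ b)
    (hs : G.degree s ≤ b + 1) (hmax : ∀ v, v ≠ s → G.degree v ≤ b + 2) :
    (∃ φ : ℕ → Finset V, validStrategy G s b φ ∧
        ∀ v, G.degree v = 1 → v ≠ s → savedBy G s φ v) ↔
      ¬(G.degree s = b + 1 ∧ ∀ v, v ≠ s → G.degree v ≠ 1 → G.degree v = b + 2) := by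
  constructor
  · rintro ⟨φ, hφ, hsave⟩ ⟨h1, h2⟩
    exact forward_dir hG s b h1 h2 φ hφ hsave
  · intro hnc
    exact backward_dir hG s b hs hmax hnc
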